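/- Let R be a noetherian commutative ring, V a noetherian R-module, and t an R-linear endomorphism of V; view V as a Z[T]-module with T acting through t. Then the evaluation map f ↦ f(1) gives an isomorphism from Hom_{Z[T]}(Z[T,T⁻¹], V) onto the submodule V^∞ = ⋂_{n≥0} tⁿV of infinitely t-divisible elements of V. -/

import Mathlib

private lemma pow_apply_seq {R V : Type*} [CommRing R] [AddCommGroup V] [Module R V]
    (t : V →ₗ[R] V) (m : ℕ → V) (hm : ∀ n : ℕ, t (m (n + 1)) = m n) :
    ∀ n k : ℕ, (t ^ k) (m (n + k)) = m n := by
  intro n k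
  induction k with
  | zero => simp
  | succ k ih =>
    rw [pow_succ, Module.End.mul_apply, show n + (k+1) = (n+k) + 1 by ring, hm, ih]

/-- Let `R` be a commutative ring, `V` a noetherian `R`-module, and `t` an `R`-linear
endomorphism of `V`, so that `V` becomes a `ℤ[T]`-module with `T` acting through `t`.
A `ℤ[T]`-linear map `ℤ[T,T⁻¹] → V` is precisely a sequence `m : ℕ → V` with
`t (m (n+1)) = m n` (where `m n = f (T⁻ⁿ)`), and evaluation at `1` is the map `m ↦ m 0`.
The theorem asserts that this evaluation map is a bijection onto the submodule
`V^∞ = ⋂ₙ tⁿ V` of infinitely `t`-divisible elements: an element `v` lies in `V^∞` if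
and only if there is a unique such sequence with value `v` at `0`. -/
theorem stmt1 {R V : Type*} [CommRing R] [AddCommGroup V] [Module R V]
    [IsNoetherian R V] (t : V →ₗ[R] V) (v : V) :
    (∀ n : ℕ, v ∈ LinearMap.range (t ^ n)) ↔
      ∃! m : {m : ℕ → V // ∀ n : ℕ, t (m (n + 1)) = m n}, (m : ℕ → V) 0 = v := by
  obtain ⟨N, hN⟩ := Filter.eventually_atTop.mp (Module.End.eventually_disjoint_ker_pow_range_pow t)
  set M := N + 1 with hMdef
  have hM : ∀ m, M ≤ m → Disjoint (LinearMap.ker (t ^ m)) (LinearMap.range (t ^ m)) :=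
    fun m hm => hN m (le_trans (Nat.le_succ N) hm)
  -- uniqueness of sequences
  have uniq : ∀ a b : {m : ℕ → V // ∀ n : ℕ, t (m (n + 1)) = m n},
      (a : ℕ → V) 0 = (b : ℕ → V) 0 → a = b := by
    rintro ⟨a, ha⟩ ⟨b, hb⟩ h0
    ext n
    have hker : (t ^ (M + n)) (a n - b n) = 0 := by
      have han : (t ^ n) (a n - b n) = 0 := by
        have := pow_apply_seq t a ha 0 n
        have := pow_apply_seq t b hb 0 n
        simp only [Nat.zero_add] at *
        simp_all [map_sub]
      exact Module.End.pow_map_zero_of_le (Nat.le_add_left n M) han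
    have hrange : a n - b n ∈ LinearMap.range (t ^ (M + n)) := by
      refine ⟨a (n + (M + n)) - b (n + (M + n)), ?_⟩
      rw [map_sub, pow_apply_seq t a ha n (M + n), pow_apply_seq t b hb n (M + n)]
    have := (hM (M + n) (Nat.le_add_right M n)).le_bot ⟨hker, hrange⟩
    rw [Submodule.mem_bot] at this
    exact sub_eq_zero.mp this
  constructor
  · intro hv
    -- t is surjective on the set of infinitely divisible elements
    have key : ∀ u : V, (∀ n, u ∈ LinearMap.range (t ^ n)) →
        ∃ w, t w = u ∧ ∀ n, w ∈ LinearMap.range (t ^ n) := by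
      intro u hu
      obtain ⟨z0, hz0⟩ := hu (M + 1)
      refine ⟨(t ^ M) z0, ?_, ?_⟩
      · rw [← Module.End.mul_apply, ← pow_succ']
        exact hz0
      · intro n
        obtain ⟨z, hz⟩ := hu (M + n + 1)
        have h1 : (t ^ M) z0 - (t ^ (M + n)) z ∈ LinearMap.ker (t ^ M) := by
          have ht : t ((t ^ M) z0 - (t ^ (M + n)) z) = 0 := by
            rw [map_sub, ← Module.End.mul_apply, ← Module.End.mul_apply, ← pow_succ',
              ← pow_succ', hz0, hz, sub_self]
          exact Module.End.pow_map_zero_of_le (k := 1) (Nat.le_add_left 1 N) (by simpa using ht)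
        have h2 : (t ^ M) z0 - (t ^ (M + n)) z ∈ LinearMap.range (t ^ M) := by
          refine sub_mem ⟨z0, rfl⟩ ⟨(t ^ n) z, ?_⟩
          rw [← Module.End.mul_apply, ← pow_add]
        have h3 := (hM M le_rfl).le_bot ⟨h1, h2⟩
        rw [Submodule.mem_bot, sub_eq_zero] at h3
        rw [h3]
        refine ⟨(t ^ M) z, ?_⟩
        rw [← Module.End.mul_apply, ← pow_add, add_comm n M]
    choose f hf1 hf2 using key
    let seq : ℕ → {u : V // ∀ n, u ∈ LinearMap.range (t ^ n)} := fun k =>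
      Nat.rec ⟨v, hv⟩ (fun _ p => ⟨f p.1 p.2, hf2 p.1 p.2⟩) k
    refine ⟨⟨fun k => (seq k).1, fun n => hf1 _ _⟩, rfl, fun b hb => uniq _ _ (hb.trans rfl)⟩
  · rintro ⟨⟨m, hm⟩, h0, -⟩ n
    exact ⟨m n, by rw [← h0]; simpa using pow_apply_seq t m hm 0 n⟩
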